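/- Let N ⊴ G be finite groups, F a field with an action φ : G → Gal(F/L) factoring through G/N, and ρ : N → GL(n,F) an absolutely irreducible representation such that for every g ∈ G there is A_g ∈ GL(n,F) with A_g · φ_g(ρ(·)) · A_g^{-1} = ρ(g·g^{-1}) (where A_n = ρ(n) for n ∈ N, up to scalar). Fix a set-theoretic section s : G/N → G. Then the map f : G → PGL(n,F) ⋊ Gal(F/L) defined by n·s(γ) ↦ ([ρ(n)A_{s(γ)}], φ_γ) is a group homomorphism, i.e., a semi-projective representation. -/

import Mathlib

section Aux

private lemma auxConjSwap {R : Type*} [Ring R] (u : Rˣ) (p q : R) (h : ↑u * p = q * ↑u) :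
    (↑u⁻¹ : R) * q = p * ↑u⁻¹ := by
  have h1 : (↑u⁻¹ : R) * (↑u * p) = p := by
    rw [← mul_assoc, Units.inv_mul, one_mul]
  rw [h] at h1
  rw [← h1, mul_assoc, mul_assoc, Units.mul_inv, mul_one]

private lemma auxMapMul {F : Type*} [Field F] {n : ℕ} (e : F ≃+* F)
    (P Q : Matrix (Fin n) (Fin n) F) :
    (P * Q).map ⇑e = P.map ⇑e * Q.map ⇑e :=
  Matrix.map_mul (f := e.toRingHom)

private lemma auxMapSmulOne {F : Type*} [Field F] {n : ℕ} (e : F ≃+* F) (c : F) :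
    (c • (1 : Matrix (Fin n) (Fin n) F)).map ⇑e = e c • (1 : Matrix (Fin n) (Fin n) F) := by
  ext i j
  by_cases h : i = j <;>
    simp [Matrix.map_apply, Matrix.one_apply, h]

end Aux


/-- Isaacs' crossed-projective representation (Proposition `stabRep`).  Let
`N ⊴ G` be finite groups, `F` a field with an action `φ : G → Gal(F/L)` (encoded
as field automorphisms of `F`) that is trivial on `N` (so it factors through
`G/N`), and `ρ : N → GL(n,F)` an (absolutely) irreducible representation, i.e.
its commutant consists of scalar matrices.  Suppose for every `g ∈ G` there is a
matrix `A g ∈ GL(n,F)` with `A g · φ_g(ρ(x)) · (A g)⁻¹ = ρ(g x g⁻¹)` for all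
`x ∈ N`, and with `A x` a scalar multiple of `ρ x` for `x ∈ N`.  Fix a
set-theoretic section `s : G/N → G` with retraction `r` (so `x = r x · s(x N)`).
Then the map `f : G → PGL(n,F) ⋊ Gal(F/L)` given by
`n·s(γ) ↦ ([ρ(n)·A_{s(γ)}], φ_γ)` is a group homomorphism, i.e. for
`M x := ρ(r x)·A_{s(xN)}` we have `M (x y) = c • (M x · φ_x(M y))` for some
scalar `c ∈ Fˣ` (the `Gal`-components multiply automatically since `φ` is a
homomorphism). -/
theorem crossedProjective_representation
    {G F : Type*} [Group G] [Finite G] [Field F] {n : ℕ}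
    (N : Subgroup G) (hN : N.Normal)
    (φ : G →* (F ≃+* F)) (hφN : ∀ x : N, φ (x : G) = 1)
    (ρ : N →* Matrix.GeneralLinearGroup (Fin n) F)
    (hirr : ∀ B : Matrix (Fin n) (Fin n) F,
      (∀ x : N, B * (ρ x : Matrix (Fin n) (Fin n) F)
        = (ρ x : Matrix (Fin n) (Fin n) F) * B) → ∃ c : F, B = c • (1 : Matrix (Fin n) (Fin n) F))
    (A : G → Matrix.GeneralLinearGroup (Fin n) F)
    (hconj : ∀ (g : G) (x : N),
      (A g : Matrix (Fin n) (Fin n) F) *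
          ((ρ x : Matrix (Fin n) (Fin n) F).map (φ g)) *
          ((A g)⁻¹ : Matrix.GeneralLinearGroup (Fin n) F)
        = (ρ (⟨g * x * g⁻¹, hN.conj_mem x.1 x.2 g⟩ : N) : Matrix (Fin n) (Fin n) F))
    (hAN : ∀ x : N, ∃ c : Fˣ,
      (A (x : G) : Matrix (Fin n) (Fin n) F) = (c : F) • (ρ x : Matrix (Fin n) (Fin n) F))
    (s : G ⧸ N → G) (hs : ∀ γ : G ⧸ N, (QuotientGroup.mk (s γ) : G ⧸ N) = γ)
    (r : G → N) (hr : ∀ x : G, (r x : G) * s (QuotientGroup.mk x) = x) :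
    ∀ x y : G, ∃ c : Fˣ,
      ((ρ (r (x * y)) : Matrix (Fin n) (Fin n) F) *
          (A (s (QuotientGroup.mk (x * y))) : Matrix (Fin n) (Fin n) F))
        = (c : F) •
          (((ρ (r x) : Matrix (Fin n) (Fin n) F) *
              (A (s (QuotientGroup.mk x)) : Matrix (Fin n) (Fin n) F)) *
            (((ρ (r y) : Matrix (Fin n) (Fin n) F) *
              (A (s (QuotientGroup.mk y)) : Matrix (Fin n) (Fin n) F)).map (φ x))) := by
  intro x y
  rcases Nat.eq_zero_or_pos n with hn | hn
  · refine ⟨1, ?_⟩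
    subst hn
    ext i j
    exact i.elim0
  classical
  -- the matrices `M g` as units
  set Mu : G → Matrix.GeneralLinearGroup (Fin n) F :=
    fun g => ρ (r g) * A (s (QuotientGroup.mk g)) with hMu
  have hMuval : ∀ g : G, (Mu g : Matrix (Fin n) (Fin n) F)
      = (ρ (r g) : Matrix (Fin n) (Fin n) F) *
        (A (s (QuotientGroup.mk g)) : Matrix (Fin n) (Fin n) F) := fun g => rfl
  have hφs : ∀ g : G, φ (s (QuotientGroup.mk g)) = φ g := by
    intro g
    conv_rhs => rw [← hr g]
    rw [map_mul, hφN, one_mul]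
  -- rearranged version of `hconj`
  have hconj' : ∀ (g : G) (z : N),
      (A g : Matrix (Fin n) (Fin n) F) * ((ρ z : Matrix (Fin n) (Fin n) F).map (φ g))
        = (ρ (⟨g * z * g⁻¹, hN.conj_mem z.1 z.2 g⟩ : N) : Matrix (Fin n) (Fin n) F) *
            (A g : Matrix (Fin n) (Fin n) F) := by
    intro g z
    rw [← hconj g z, mul_assoc, mul_assoc, Units.inv_mul, mul_one]
  -- key intertwining relation for `Mu g`
  have key1 : ∀ (g : G) (z : N),
      (Mu g : Matrix (Fin n) (Fin n) F) * ((ρ z : Matrix (Fin n) (Fin n) F).map (φ g))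
        = (ρ (⟨g * z * g⁻¹, hN.conj_mem z.1 z.2 g⟩ : N) : Matrix (Fin n) (Fin n) F) *
            (Mu g : Matrix (Fin n) (Fin n) F) := by
    intro g z
    set g' : G := s (QuotientGroup.mk g) with hg'
    set t : N := r g with ht'
    have hNeq : t * (⟨g' * z * g'⁻¹, hN.conj_mem z.1 z.2 g'⟩ : N)
        = (⟨g * z * g⁻¹, hN.conj_mem z.1 z.2 g⟩ : N) * t := by
      ext
      show (t : G) * (g' * z * g'⁻¹) = (g * z * g⁻¹) * t
      rw [← hr g]
      rw [ht', hg']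
      group
    calc (Mu g : Matrix (Fin n) (Fin n) F) * ((ρ z : Matrix (Fin n) (Fin n) F).map (φ g))
        = (ρ t : Matrix (Fin n) (Fin n) F) *
            ((A g' : Matrix (Fin n) (Fin n) F) *
              ((ρ z : Matrix (Fin n) (Fin n) F).map (φ g'))) := by
          rw [hMuval g, mul_assoc, hφs g]
      _ = (ρ t : Matrix (Fin n) (Fin n) F) *
            ((ρ (⟨g' * z * g'⁻¹, hN.conj_mem z.1 z.2 g'⟩ : N) : Matrix (Fin n) (Fin n) F) *
              (A g' : Matrix (Fin n) (Fin n) F)) := by rw [hconj' g' z]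
      _ = ((ρ (t * ⟨g' * z * g'⁻¹, hN.conj_mem z.1 z.2 g'⟩) : Matrix (Fin n) (Fin n) F)) *
              (A g' : Matrix (Fin n) (Fin n) F) := by
          rw [map_mul, Units.val_mul]
          exact (mul_assoc _ _ _).symm
      _ = ((ρ ((⟨g * z * g⁻¹, hN.conj_mem z.1 z.2 g⟩ : N) * t) : Matrix (Fin n) (Fin n) F)) *
              (A g' : Matrix (Fin n) (Fin n) F) := by rw [hNeq]
      _ = (ρ (⟨g * z * g⁻¹, hN.conj_mem z.1 z.2 g⟩ : N) : Matrix (Fin n) (Fin n) F) *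
            (Mu g : Matrix (Fin n) (Fin n) F) := by
          rw [map_mul, Units.val_mul, hMuval g]
          exact mul_assoc _ _ _
  -- the candidate image of the product, as a unit
  set Cu : Matrix.GeneralLinearGroup (Fin n) F :=
    Mu x * Units.map ((φ x).toRingHom.mapMatrix.toMonoidHom) (Mu y) with hCu
  have hCuval : (Cu : Matrix (Fin n) (Fin n) F)
      = (Mu x : Matrix (Fin n) (Fin n) F) *
        ((Mu y : Matrix (Fin n) (Fin n) F)).map (φ x) := rfl
  have hcomp : ⇑(φ (x * y)) = ⇑(φ x) ∘ ⇑(φ y) := by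
    rw [map_mul]; rfl
  -- intertwining relation for `Cu`
  have key2 : ∀ z : N,
      (Cu : Matrix (Fin n) (Fin n) F) * ((ρ z : Matrix (Fin n) (Fin n) F).map (φ (x * y)))
        = (ρ (⟨(x * y) * z * (x * y)⁻¹, hN.conj_mem z.1 z.2 (x * y)⟩ : N) :
              Matrix (Fin n) (Fin n) F) * (Cu : Matrix (Fin n) (Fin n) F) := by
    intro z
    set w : N := ⟨y * z * y⁻¹, hN.conj_mem z.1 z.2 y⟩ with hw
    have hNeq : (⟨x * w * x⁻¹, hN.conj_mem w.1 w.2 x⟩ : N)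
        = (⟨(x * y) * z * (x * y)⁻¹, hN.conj_mem z.1 z.2 (x * y)⟩ : N) := by
      ext
      show x * (y * z * y⁻¹) * x⁻¹ = (x * y) * z * (x * y)⁻¹
      group
    calc (Cu : Matrix (Fin n) (Fin n) F) * ((ρ z : Matrix (Fin n) (Fin n) F).map (φ (x * y)))
        = (Mu x : Matrix (Fin n) (Fin n) F) *
            (((Mu y : Matrix (Fin n) (Fin n) F) *
              ((ρ z : Matrix (Fin n) (Fin n) F).map (φ y))).map (φ x)) := by
          rw [hCuval, hcomp, ← Matrix.map_map, mul_assoc, auxMapMul]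
      _ = (Mu x : Matrix (Fin n) (Fin n) F) *
            (((ρ w : Matrix (Fin n) (Fin n) F) *
              (Mu y : Matrix (Fin n) (Fin n) F)).map (φ x)) := by
          rw [key1 y z]
      _ = ((Mu x : Matrix (Fin n) (Fin n) F) *
            ((ρ w : Matrix (Fin n) (Fin n) F)).map (φ x)) *
              ((Mu y : Matrix (Fin n) (Fin n) F)).map (φ x) := by
          rw [auxMapMul, mul_assoc]
      _ = ((ρ (⟨x * w * x⁻¹, hN.conj_mem w.1 w.2 x⟩ : N) : Matrix (Fin n) (Fin n) F) *
            (Mu x : Matrix (Fin n) (Fin n) F)) *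
              ((Mu y : Matrix (Fin n) (Fin n) F)).map (φ x) := by
          rw [key1 x w]
      _ = (ρ (⟨(x * y) * z * (x * y)⁻¹, hN.conj_mem z.1 z.2 (x * y)⟩ : N) :
              Matrix (Fin n) (Fin n) F) * (Cu : Matrix (Fin n) (Fin n) F) := by
          rw [hNeq, hCuval, mul_assoc]
  -- the defect unit
  set Du : Matrix.GeneralLinearGroup (Fin n) F := Cu⁻¹ * Mu (x * y) with hDu
  have hDcomm : ∀ z : N,
      (Du : Matrix (Fin n) (Fin n) F) * ((ρ z : Matrix (Fin n) (Fin n) F).map (φ (x * y)))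
        = ((ρ z : Matrix (Fin n) (Fin n) F).map (φ (x * y))) *
            (Du : Matrix (Fin n) (Fin n) F) := by
    intro z
    have hswap := auxConjSwap Cu _ _ (key2 z)
    calc (Du : Matrix (Fin n) (Fin n) F) * ((ρ z : Matrix (Fin n) (Fin n) F).map (φ (x * y)))
        = (Cu⁻¹ : Matrix.GeneralLinearGroup (Fin n) F) *
            ((Mu (x * y) : Matrix (Fin n) (Fin n) F) *
              ((ρ z : Matrix (Fin n) (Fin n) F).map (φ (x * y)))) := by
          rw [hDu, Units.val_mul, mul_assoc]
      _ = (Cu⁻¹ : Matrix.GeneralLinearGroup (Fin n) F) *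
            ((ρ (⟨(x * y) * z * (x * y)⁻¹, hN.conj_mem z.1 z.2 (x * y)⟩ : N) :
              Matrix (Fin n) (Fin n) F) * (Mu (x * y) : Matrix (Fin n) (Fin n) F)) := by
          rw [key1 (x * y) z]
      _ = ((Cu⁻¹ : Matrix.GeneralLinearGroup (Fin n) F) *
            (ρ (⟨(x * y) * z * (x * y)⁻¹, hN.conj_mem z.1 z.2 (x * y)⟩ : N) :
              Matrix (Fin n) (Fin n) F)) * (Mu (x * y) : Matrix (Fin n) (Fin n) F) := by
          exact (mul_assoc _ _ _).symm
      _ = (((ρ z : Matrix (Fin n) (Fin n) F).map (φ (x * y))) *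
            (Cu⁻¹ : Matrix.GeneralLinearGroup (Fin n) F)) *
              (Mu (x * y) : Matrix (Fin n) (Fin n) F) := by
          rw [hswap]
      _ = ((ρ z : Matrix (Fin n) (Fin n) F).map (φ (x * y))) *
            (Du : Matrix (Fin n) (Fin n) F) := by
          rw [hDu, Units.val_mul]
          exact mul_assoc _ _ _
  -- transport the commutation through the inverse field automorphism
  have hsymm : ⇑(φ (x * y)).symm ∘ ⇑(φ (x * y)) = id := by
    funext a
    exact (φ (x * y)).symm_apply_apply a
  have hEcomm : ∀ z : N,
      ((Du : Matrix (Fin n) (Fin n) F).map ⇑(φ (x * y)).symm) *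
          (ρ z : Matrix (Fin n) (Fin n) F)
        = (ρ z : Matrix (Fin n) (Fin n) F) *
            ((Du : Matrix (Fin n) (Fin n) F).map ⇑(φ (x * y)).symm) := by
    intro z
    have h := congrArg (fun P => P.map ⇑(φ (x * y)).symm) (hDcomm z)
    simp only [auxMapMul] at h
    rw [Matrix.map_map, hsymm, Matrix.map_id] at h
    exact h
  obtain ⟨c0, hc0⟩ := hirr _ hEcomm
  have hDval : (Du : Matrix (Fin n) (Fin n) F)
      = (φ (x * y)) c0 • (1 : Matrix (Fin n) (Fin n) F) := by
    have h1 : ((Du : Matrix (Fin n) (Fin n) F).map ⇑(φ (x * y)).symm).map ⇑(φ (x * y))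
        = (Du : Matrix (Fin n) (Fin n) F) := by
      rw [Matrix.map_map]
      have : ⇑(φ (x * y)) ∘ ⇑(φ (x * y)).symm = id := by
        funext a
        exact (φ (x * y)).apply_symm_apply a
      rw [this, Matrix.map_id]
    rw [← h1, hc0, auxMapSmulOne]
  set d : F := (φ (x * y)) c0 with hd
  -- `d` is a unit
  have hdunit : IsUnit d := by
    have h1 : (Du : Matrix (Fin n) (Fin n) F) * ((Du⁻¹ : Matrix.GeneralLinearGroup (Fin n) F) :
        Matrix (Fin n) (Fin n) F) = 1 := Units.mul_inv Du
    rw [hDval] at h1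
    have h2 := congrArg (fun P : Matrix (Fin n) (Fin n) F => P ⟨0, hn⟩ ⟨0, hn⟩) h1
    simp only [Matrix.smul_mul, Matrix.one_mul, Matrix.smul_apply, Matrix.one_apply_eq,
      smul_eq_mul] at h2
    exact isUnit_iff_exists_inv.mpr ⟨_, h2⟩
  refine ⟨hdunit.unit, ?_⟩
  have hfin : (Mu (x * y) : Matrix (Fin n) (Fin n) F)
      = d • (Cu : Matrix (Fin n) (Fin n) F) := by
    have h1 : Cu * Du = Mu (x * y) := by
      rw [hDu, mul_inv_cancel_left]
    calc (Mu (x * y) : Matrix (Fin n) (Fin n) F)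
        = (Cu : Matrix (Fin n) (Fin n) F) * (Du : Matrix (Fin n) (Fin n) F) := by
          rw [← h1, Units.val_mul]
      _ = (Cu : Matrix (Fin n) (Fin n) F) * (d • (1 : Matrix (Fin n) (Fin n) F)) := by
          rw [hDval]
      _ = d • (Cu : Matrix (Fin n) (Fin n) F) := by
          rw [Matrix.mul_smul, Matrix.mul_one]
  rw [IsUnit.unit_spec]
  calc (ρ (r (x * y)) : Matrix (Fin n) (Fin n) F) *
        (A (s (QuotientGroup.mk (x * y))) : Matrix (Fin n) (Fin n) F)
      = (Mu (x * y) : Matrix (Fin n) (Fin n) F) := (hMuval (x * y)).symm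
    _ = d • (Cu : Matrix (Fin n) (Fin n) F) := hfin
    _ = d • (((ρ (r x) : Matrix (Fin n) (Fin n) F) *
          (A (s (QuotientGroup.mk x)) : Matrix (Fin n) (Fin n) F)) *
        (((ρ (r y) : Matrix (Fin n) (Fin n) F) *
          (A (s (QuotientGroup.mk y)) : Matrix (Fin n) (Fin n) F)).map (φ x))) := by
        rw [hCuval, hMuval x, hMuval y]
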